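/- Let M be a complete pointed metric space and let Γ ⊂ F(M) be a (V*)-set with respect to F(M). Then for every ε > 0 there exists R > 0 such that Γ ⊂ F(B(0,R)) + ε B_{F(M)}, where B(0,R) is the closed ball in M of radius R around the base point. -/

import Mathlib

open Filter Topology Metric Set

noncomputable section

/-- A formal series `∑ yₙ` in a normed space `Y` is weakly unconditionally Cauchy (WUC)
if `∑ |⟨φ, yₙ⟩| < ∞` for every continuous linear functional `φ` on `Y`. -/
def IsWUC {Y : Type*} [SeminormedAddCommGroup Y] [NormedSpace ℝ Y] (y : ℕ → Y) : Prop :=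
  ∀ φ : Y →L[ℝ] ℝ, Summable fun n => |φ (y n)|

/-- `Γ` is a (V*)-set in `X`: for every WUC series `∑ fₙ` in the dual `X*`,
`sup_{x ∈ Γ} |⟨x, fₙ⟩| → 0`. -/
def IsVStarSet {X : Type*} [SeminormedAddCommGroup X] [NormedSpace ℝ X] (Γ : Set X) : Prop :=
  ∀ f : ℕ → (X →L[ℝ] ℝ), IsWUC f →
    ∀ ε > (0 : ℝ), ∀ᶠ n in atTop, ∀ x ∈ Γ, |f n x| ≤ ε

/-- `Γ` is relatively weakly compact: its closure in the weak topology is compact. -/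
def RelWeaklyCompact {X : Type*} [SeminormedAddCommGroup X] [NormedSpace ℝ X]
    (Γ : Set X) : Prop :=
  IsCompact (closure ((toWeakSpace ℝ X) '' Γ))

/-- A normed space has Pełczyński's property (V*) if every (V*)-set is relatively
weakly compact. -/
def HasPropertyVStar (X : Type*) [SeminormedAddCommGroup X] [NormedSpace ℝ X] : Prop :=
  ∀ Γ : Set X, IsVStarSet Γ → RelWeaklyCompact Γ

/-- `F`, together with the map `δ : M → F`, is (a realization of) the Lipschitz-free space
over the pointed metric space `(M, o)`: `δ` is a base-point-preserving isometric embedding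
whose range has dense linear span, and every Lipschitz function `f : M → ℝ` vanishing at
the base point lifts to a continuous linear functional of norm at most `Lip(f)` (this
characterizes `F(M)`, with dual `Lip₀(M)`, up to isometric isomorphism). -/
structure IsLipschitzFree {M : Type*} [MetricSpace M] (o : M)
    {F : Type*} [NormedAddCommGroup F] [NormedSpace ℝ F] (δ : M → F) : Prop where
  isometry : Isometry δ
  map_base : δ o = 0
  dense_span : Dense (Submodule.span ℝ (Set.range δ) : Set F)
  lift : ∀ (L : NNReal) (f : M → ℝ), LipschitzWith L f → f o = 0 →
    ∃ φ : F →L[ℝ] ℝ, ‖φ‖ ≤ L ∧ ∀ x, φ (δ x) = f x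

/-- The subspace of `F` corresponding to the Lipschitz-free space `F(S)` over a subset
`S ⊆ M`: the closed linear span of `δ(S)`. -/
def freeSpan {M : Type*} [MetricSpace M] {F : Type*} [NormedAddCommGroup F]
    [NormedSpace ℝ F] (δ : M → F) (S : Set M) : Submodule ℝ F :=
  (Submodule.span ℝ (δ '' S)).topologicalClosure

theorem mem_freeSpan {M : Type*} [MetricSpace M] {F : Type*} [NormedAddCommGroup F]
    [NormedSpace ℝ F] (δ : M → F) {S : Set M} {x : M} (hx : x ∈ S) :
    δ x ∈ freeSpan δ S :=
  (Submodule.span ℝ (δ '' S)).le_topologicalClosure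
    (Submodule.subset_span ⟨x, hx, rfl⟩)


section MyAux

variable {M : Type*} [MetricSpace M] {F : Type*} [NormedAddCommGroup F] [NormedSpace ℝ F]

/-- Hahn–Banach: a functional of norm ≤ 1 vanishing on a closed subspace and large at a
point far from it. -/
lemma my_exists_functional_of_far (K : Submodule ℝ F) (hK : IsClosed (K : Set F))
    {γ : F} {ε : ℝ} (hε : 0 < ε) (hfar : ∀ z ∈ K, ε ≤ ‖γ - z‖) :
    ∃ φ : F →L[ℝ] ℝ, ‖φ‖ ≤ 1 ∧ (∀ z ∈ K, φ z = 0) ∧ ε ≤ φ γ := by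
  haveI : IsClosed (K : Set F) := hK
  set q : F ⧸ K := Submodule.Quotient.mk γ with hq
  have hle : ε ≤ ‖q‖ := by
    by_contra hlt
    push_neg at hlt
    obtain ⟨m, hm, hnorm⟩ := Submodule.Quotient.norm_mk_lt q (show 0 < ε - ‖q‖ by linarith)
    have hmem : γ - m ∈ K := by
      have : m - γ ∈ K := (Submodule.Quotient.eq K).mp (hm.trans hq.symm ▸ hm)
      have h2 : m - γ ∈ K := by
        rw [← Submodule.Quotient.eq K]
        exact hm
      simpa using K.neg_mem h2
    have := hfar (γ - m) hmem
    simp only [sub_sub_cancel] at this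
    linarith
  have hq0 : q ≠ 0 := by
    intro h
    rw [h, norm_zero] at hle
    linarith
  obtain ⟨g, hg1, hgq⟩ := exists_dual_vector ℝ q (norm_ne_zero_iff.mpr hq0)
  have hmkb : ∀ x : F, ‖(Submodule.Quotient.mk x : F ⧸ K)‖ ≤ 1 * ‖x‖ := fun x => by
    simpa using Submodule.Quotient.norm_mk_le K x
  set mkC : F →L[ℝ] F ⧸ K := LinearMap.mkContinuous K.mkQ 1 hmkb with hmkC
  refine ⟨g.comp mkC, ?_, ?_, ?_⟩
  · calc ‖g.comp mkC‖ ≤ ‖g‖ * ‖mkC‖ := g.opNorm_comp_le mkC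
    _ ≤ 1 * 1 := by
        apply mul_le_mul (le_of_eq hg1) (LinearMap.mkContinuous_norm_le _ zero_le_one _)
          (norm_nonneg _) zero_le_one
    _ = 1 := one_mul 1
  · intro z hz
    have : mkC z = 0 := (Submodule.Quotient.mk_eq_zero K).mpr hz
    simp [ContinuousLinearMap.comp_apply, this]
  · have : g.comp mkC γ = g q := rfl
    rw [this, hgq]
    simpa using hle

end MyAux

section MyAux2

variable {M : Type*} [MetricSpace M]

/-- A signed sum of pointwise "disjoint" 1-Lipschitz functions is 2-Lipschitz. -/
lemma my_sum_lipschitz (h : ℕ → M → ℝ) (hl : ∀ n, LipschitzWith 1 (h n))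
    (hd : ∀ (x : M) (m n : ℕ), m ≠ n → h m x = 0 ∨ h n x = 0)
    (θ : ℕ → ℝ) (hθ : ∀ n, |θ n| ≤ 1) (A : Finset ℕ) :
    LipschitzWith 2 (fun x => ∑ n ∈ A, θ n * h n x) := by
  classical
  apply LipschitzWith.of_dist_le_mul
  intro x y
  rw [Real.dist_eq]
  set B := A.filter (fun n => ¬(h n x = 0 ∧ h n y = 0)) with hB
  have hcard : B.card ≤ 2 := by
    have hsub : B ⊆ A.filter (fun n => h n x ≠ 0) ∪ A.filter (fun n => h n y ≠ 0) := by
      intro n hn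
      rw [hB, Finset.mem_filter] at hn
      rcases not_and_or.mp hn.2 with h1 | h2
      · exact Finset.mem_union_left _ (Finset.mem_filter.mpr ⟨hn.1, h1⟩)
      · exact Finset.mem_union_right _ (Finset.mem_filter.mpr ⟨hn.1, h2⟩)
    have c1 : (A.filter (fun n => h n x ≠ 0)).card ≤ 1 := by
      rw [Finset.card_le_one]
      intro a ha b hb
      rw [Finset.mem_filter] at ha hb
      by_contra hab
      rcases hd x a b hab with h1 | h1
      · exact ha.2 h1
      · exact hb.2 h1
    have c2 : (A.filter (fun n => h n y ≠ 0)).card ≤ 1 := by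
      rw [Finset.card_le_one]
      intro a ha b hb
      rw [Finset.mem_filter] at ha hb
      by_contra hab
      rcases hd y a b hab with h1 | h1
      · exact ha.2 h1
      · exact hb.2 h1
    calc B.card ≤ _ := Finset.card_le_card hsub
    _ ≤ _ := Finset.card_union_le _ _
    _ ≤ 2 := by omega
  calc |∑ n ∈ A, θ n * h n x - ∑ n ∈ A, θ n * h n y|
      = |∑ n ∈ A, (θ n * h n x - θ n * h n y)| := by rw [Finset.sum_sub_distrib]
    _ ≤ ∑ n ∈ A, |θ n * h n x - θ n * h n y| := Finset.abs_sum_le_sum_abs _ _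
    _ = ∑ n ∈ B, |θ n * h n x - θ n * h n y| := by
        refine (Finset.sum_subset (Finset.filter_subset _ _) ?_).symm
        intro n hn hnB
        rw [Finset.mem_filter, not_and] at hnB
        have := not_not.mp (hnB hn)
        rw [this.1, this.2]
        simp
    _ ≤ ∑ n ∈ B, dist x y := by
        refine Finset.sum_le_sum fun n hn => ?_
        rw [← mul_sub, abs_mul]
        calc |θ n| * |h n x - h n y| ≤ 1 * |h n x - h n y| :=
              mul_le_mul_of_nonneg_right (hθ n) (abs_nonneg _)
          _ = dist (h n x) (h n y) := by rw [one_mul, Real.dist_eq]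
          _ ≤ dist x y := by simpa using (hl n).dist_le_mul x y
    _ = B.card * dist x y := by rw [Finset.sum_const, nsmul_eq_mul]
    _ ≤ 2 * dist x y := by
        apply mul_le_mul_of_nonneg_right _ dist_nonneg
        exact_mod_cast hcard

variable {F : Type*} [NormedAddCommGroup F] [NormedSpace ℝ F]

lemma my_funct_ext {o : M} {δ : M → F} (hδ : IsLipschitzFree o δ) {f g : F →L[ℝ] ℝ}
    (h : ∀ x, f (δ x) = g (δ x)) : f = g :=
  ContinuousLinearMap.ext_on hδ.dense_span (by rintro _ ⟨x, rfl⟩; exact h x)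

/-- Truncated positive part of a functional vanishing on a ball, lifted back. -/
lemma my_pos_part {o : M} {δ : M → F} (hδ : IsLipschitzFree o δ) (φ : F →L[ℝ] ℝ)
    (hφ : ‖φ‖ ≤ 1) {R S : ℝ} (hR : 0 < R) (hRS : R ≤ S)
    (hvan : ∀ x, dist x o ≤ R → φ (δ x) = 0) :
    ∃ (ψ : F →L[ℝ] ℝ) (h : M → ℝ), ‖ψ‖ ≤ 1 ∧ (∀ x, ψ (δ x) = h x) ∧
      LipschitzWith 1 h ∧ (∀ x, dist x o ≤ R → h x = 0) ∧
      (∀ x, 2*S ≤ dist x o → h x = 0) ∧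
      (∀ x, dist x o ≤ S → h x = max (φ (δ x)) 0) := by
  set g : M → ℝ := fun x => φ (δ x) with hgdef
  have hg : LipschitzWith 1 g := by
    have h1 : LipschitzWith (‖φ‖₊ * 1) (fun x => φ (δ x)) :=
      φ.lipschitz.comp hδ.isometry.lipschitz
    refine LipschitzWith.weaken h1 ?_
    rw [mul_one]
    exact_mod_cast hφ
  have hgo : g o = 0 := by
    rw [hgdef]
    simp [hδ.map_base]
  have hgbound : ∀ x, |g x| ≤ dist x o := by
    intro x
    have := hg.dist_le_mul x o
    rwa [Real.dist_eq, hgo, sub_zero, NNReal.coe_one, one_mul] at this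
  set c : M → ℝ := fun x => max (2*S - dist x o) 0 with hcdef
  have hc : LipschitzWith 1 c := by
    have h1 : LipschitzWith 1 (fun x : M => 2*S - dist x o) := by
      apply LipschitzWith.of_dist_le_mul
      intro x y
      rw [Real.dist_eq, NNReal.coe_one, one_mul]
      have h2 : (2*S - dist x o) - (2*S - dist y o) = -(dist x o - dist y o) := by ring
      rw [h2, abs_neg]
      exact abs_dist_sub_le x y o
    exact h1.max_const 0
  set h : M → ℝ := fun x => min (max (g x) 0) (c x) with hhdef
  have hh : LipschitzWith 1 h := by
    have := (hg.max_const 0).min hc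
    simpa using this
  have hin : ∀ x, dist x o ≤ R → h x = 0 := by
    intro x hx
    have hgx : g x = 0 := hvan x hx
    show min (max (g x) 0) (c x) = 0
    rw [hgx]
    simp only [max_self]
    apply min_eq_left
    exact le_max_right _ _
  have hout : ∀ x, 2*S ≤ dist x o → h x = 0 := by
    intro x hx
    have hcx : c x = 0 := by
      show max (2*S - dist x o) 0 = 0
      rw [max_eq_right]
      linarith
    show min (max (g x) 0) (c x) = 0
    rw [hcx, min_eq_right]
    exact le_max_right _ _
  have hmid : ∀ x, dist x o ≤ S → h x = max (g x) 0 := by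
    intro x hx
    show min (max (g x) 0) (c x) = max (g x) 0
    apply min_eq_left
    have h1 : max (g x) 0 ≤ S := by
      apply max_le _ (by linarith)
      calc g x ≤ |g x| := le_abs_self _
        _ ≤ dist x o := hgbound x
        _ ≤ S := hx
    have h2 : S ≤ c x := by
      show S ≤ max (2*S - dist x o) 0
      apply le_max_of_le_left
      linarith
    linarith
  have hho : h o = 0 := hin o (by rw [dist_self]; linarith)
  obtain ⟨ψ, hψn, hψδ⟩ := hδ.lift 1 h hh hho
  exact ⟨ψ, h, by simpa using hψn, hψδ, hh, hin, hout, hmid⟩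

end MyAux2

section MyStep

variable {M : Type*} [MetricSpace M] {F : Type*} [NormedAddCommGroup F] [NormedSpace ℝ F]

lemma my_exists_radius {o : M} {δ : M → F} (t : Finset F) (ht : ↑t ⊆ Set.range δ)
    (R : ℝ) (hR : 1 ≤ R) :
    ∃ S : ℝ, R ≤ S ∧ ↑t ⊆ δ '' (closedBall o S) := by
  classical
  revert ht
  induction t using Finset.induction_on with
  | empty => exact fun _ => ⟨R, le_refl R, by simp⟩
  | @insert v t hv ih =>
    intro ht
    have ht' : ↑t ⊆ Set.range δ := by
      intro z hz
      exact ht (by simp [hz])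
    obtain ⟨S, hS1, hS2⟩ := ih ht'
    obtain ⟨x, hx⟩ := ht (show v ∈ (↑(insert v t) : Set F) by simp)
    refine ⟨max S (dist x o), le_trans hS1 (le_max_left _ _), ?_⟩
    rw [Finset.coe_insert, Set.insert_subset_iff]
    constructor
    · exact ⟨x, by simp, hx⟩
    · exact hS2.trans (Set.image_mono (closedBall_subset_closedBall (le_max_left _ _)))

lemma my_exists_step {o : M} {δ : M → F} (hδ : IsLipschitzFree o δ) {Γ : Set F} {ε : ℝ}
    (hε : 0 < ε)
    (hyp : ∀ R > (0:ℝ), ∃ γ ∈ Γ, ∀ z ∈ freeSpan δ (Metric.closedBall o R), ε < ‖γ - z‖)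
    {R : ℝ} (hR : 1 ≤ R) :
    ∃ (S : ℝ) (f : F →L[ℝ] ℝ) (γ : F) (h : M → ℝ),
      R ≤ S ∧ 1 ≤ S ∧ γ ∈ Γ ∧ ‖f‖ ≤ 1 ∧ (∀ x, f (δ x) = h x) ∧ LipschitzWith 1 h ∧
      (∀ x, dist x o ≤ R → h x = 0) ∧ (∀ x, 2*S ≤ dist x o → h x = 0) ∧
      ε/4 < |f γ| := by
  have hR0 : (0:ℝ) < R := by linarith
  obtain ⟨γ, hγΓ, hfar⟩ := hyp R hR0
  set K := freeSpan δ (Metric.closedBall o R) with hK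
  obtain ⟨φ, hφ1, hφK, hφγ⟩ := my_exists_functional_of_far K
    (Submodule.isClosed_topologicalClosure _) hε (fun z hz => (hfar z hz).le)
  -- approximate γ by a finitely supported element
  have hdense := hδ.dense_span γ
  rw [Metric.mem_closure_iff] at hdense
  obtain ⟨μ, hμmem, hμγ⟩ := hdense (ε/8) (by positivity)
  have hμspan : μ ∈ Submodule.span ℝ (Set.range δ) := hμmem
  obtain ⟨t, htsub, hμt⟩ := Submodule.mem_span_finite_of_mem_span hμspan
  obtain ⟨S, hRS, htS⟩ := my_exists_radius (o := o) t htsub R hR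
  have hS1 : 1 ≤ S := le_trans hR hRS
  have hμS : μ ∈ Submodule.span ℝ (δ '' closedBall o S) := Submodule.span_mono htS hμt
  -- vanishing of φ on the ball
  have hvan : ∀ x, dist x o ≤ R → φ (δ x) = 0 := fun x hx =>
    hφK _ (mem_freeSpan δ (mem_closedBall.mpr hx))
  have hvan' : ∀ x, dist x o ≤ R → (-φ) (δ x) = 0 := fun x hx => by
    simp [hvan x hx]
  -- positive and negative truncated parts
  obtain ⟨ψp, hp, hψp1, hψpδ, hplip, hpin, hpout, hpmid⟩ :=
    my_pos_part hδ φ hφ1 hR0 hRS hvan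
  obtain ⟨ψm, hm, hψm1, hψmδ, hmlip, hmin, hmout, hmmid⟩ :=
    my_pos_part hδ (-φ) (by simpa using hφ1) hR0 hRS hvan'
  -- ψp - ψm = φ on span (δ '' B(o,S))
  have hkey : ∀ z ∈ Submodule.span ℝ (δ '' closedBall o S), ψp z - ψm z = φ z := by
    intro z hz
    induction hz using Submodule.span_induction with
    | mem z hzz =>
      obtain ⟨x, hx, rfl⟩ := hzz
      rw [hψpδ, hψmδ, hpmid x (mem_closedBall.mp hx), hmmid x (mem_closedBall.mp hx)]
      simp only [ContinuousLinearMap.neg_apply]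
      rcases le_total (φ (δ x)) 0 with hle | hle
      · rw [max_eq_right hle, max_eq_left (by linarith)]
        ring
      · rw [max_eq_left hle, max_eq_right (by linarith)]
        ring
    | zero => simp
    | add a b _ _ ha hb => simp only [map_add]; linarith
    | smul r a _ ha =>
      simp only [map_smul, smul_eq_mul]
      rw [← mul_sub, ha]
  have hγμ : ‖γ - μ‖ ≤ ε/8 := by rw [← dist_eq_norm]; linarith
  have hφμ : 7*ε/8 ≤ φ μ := by
    have h0 : |φ (γ - μ)| ≤ ‖φ‖ * ‖γ - μ‖ := by
      simpa [Real.norm_eq_abs] using φ.le_opNorm (γ - μ)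
    have h1 : |φ γ - φ μ| ≤ ε/8 := by
      rw [← map_sub]
      calc |φ (γ - μ)| ≤ ‖φ‖ * ‖γ - μ‖ := h0
        _ ≤ 1 * (ε/8) := mul_le_mul hφ1 hγμ (norm_nonneg _) zero_le_one
        _ = ε/8 := one_mul _
    have h2 := abs_le.mp h1
    linarith [h2.1, h2.2]
  have hsum : ψp μ - ψm μ = φ μ := hkey μ hμS
  have final : ∀ (f : F →L[ℝ] ℝ), ‖f‖ ≤ 1 → 7*ε/16 ≤ |f μ| → ε/4 < |f γ| := by
    intro f hf1 hfμ
    have h0 : |f γ - f μ| ≤ ε/8 := by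
      rw [← map_sub]
      calc |f (γ - μ)| = ‖f (γ - μ)‖ := (Real.norm_eq_abs _).symm
        _ ≤ ‖f‖ * ‖γ - μ‖ := f.le_opNorm _
        _ ≤ 1 * (ε/8) := mul_le_mul hf1 hγμ (norm_nonneg _) zero_le_one
        _ = ε/8 := one_mul _
    have h1 := abs_sub_abs_le_abs_sub (f μ) (f γ)
    have h2 : |f μ - f γ| = |f γ - f μ| := abs_sub_comm _ _
    linarith
  by_cases hcase : 7*ε/16 ≤ |ψp μ|
  · exact ⟨S, ψp, γ, hp, hRS, hS1, hγΓ, hψp1, hψpδ, hplip, hpin, hpout,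
      final ψp hψp1 hcase⟩
  · push_neg at hcase
    have hψmμ : 7*ε/16 ≤ |ψm μ| := by
      have h2 : |φ μ - ψp μ| = |ψm μ| := by
        have : φ μ - ψp μ = -(ψm μ) := by linarith
        rw [this, abs_neg]
      have h3 := abs_sub_abs_le_abs_sub (φ μ) (ψp μ)
      have h4 : 7*ε/8 ≤ |φ μ| := le_trans hφμ (le_abs_self _)
      linarith
    exact ⟨S, ψm, γ, hm, hRS, hS1, hγΓ, hψm1, hψmδ, hmlip, hmin, hmout,
      final ψm hψm1 hψmμ⟩

end MyStep


/-- If `Γ ⊆ F(M)` is a (V*)-set with respect to `F(M)`, then for every `ε > 0` there is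
`R > 0` such that `Γ ⊆ F(B(0,R)) + ε B_{F(M)}`, where `B(0,R)` is the closed ball of
radius `R` around the base point. -/
theorem vStarSet_almost_in_ball
    {M : Type*} [MetricSpace M] [CompleteSpace M] (o : M)
    {F : Type*} [NormedAddCommGroup F] [NormedSpace ℝ F] [CompleteSpace F]
    (δ : M → F) (hδ : IsLipschitzFree o δ)
    (Γ : Set F) (hΓ : IsVStarSet Γ) :
    ∀ ε > (0 : ℝ), ∃ R > (0 : ℝ),
      ∀ γ ∈ Γ, ∃ z ∈ freeSpan δ (Metric.closedBall o R), ‖γ - z‖ ≤ ε := by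
  intro ε hε
  by_contra hcon
  push_neg at hcon
  have hyp : ∀ R > (0:ℝ), ∃ γ ∈ Γ, ∀ z ∈ freeSpan δ (Metric.closedBall o R), ε < ‖γ - z‖ :=
    hcon
  have main : ∀ R : ℝ, ∃ (S : ℝ) (f : F →L[ℝ] ℝ) (γ : F) (h : M → ℝ), 1 ≤ R →
      (R ≤ S ∧ 1 ≤ S ∧ γ ∈ Γ ∧ ‖f‖ ≤ 1 ∧ (∀ x, f (δ x) = h x) ∧ LipschitzWith 1 h ∧
      (∀ x, dist x o ≤ R → h x = 0) ∧ (∀ x, 2*S ≤ dist x o → h x = 0) ∧ ε/4 < |f γ|) := by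
    intro R
    by_cases hR : 1 ≤ R
    · obtain ⟨S, f, γ, h, props⟩ := my_exists_step hδ hε hyp hR
      exact ⟨S, f, γ, h, fun _ => props⟩
    · exact ⟨1, 0, 0, fun _ => 0, fun h => absurd h hR⟩
  choose Sf ff γf hf hprop using main
  set Rad : ℕ → ℝ := fun n => Nat.rec (motive := fun _ => ℝ) 1 (fun _ r => 4 * Sf r) n
    with hRad
  have hRadsucc : ∀ n, Rad (n+1) = 4 * Sf (Rad n) := fun n => rfl
  have hRad1 : ∀ n, 1 ≤ Rad n := by
    intro n
    induction n with
    | zero => exact le_of_eq rfl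
    | succ n ih =>
      have h1 := (hprop (Rad n) ih).2.1
      rw [hRadsucc]
      linarith
  have hRadmono : Monotone Rad := by
    apply monotone_nat_of_le_succ
    intro n
    have h0 := (hprop (Rad n) (hRad1 n)).1
    have h1 := (hprop (Rad n) (hRad1 n)).2.1
    rw [hRadsucc]
    linarith
  set hh : ℕ → M → ℝ := fun n => hf (Rad n) with hhdef
  set FF : ℕ → F →L[ℝ] ℝ := fun n => ff (Rad n) with hFFdef
  have P : ∀ n, Rad n ≤ Sf (Rad n) ∧ 1 ≤ Sf (Rad n) ∧ γf (Rad n) ∈ Γ ∧ ‖FF n‖ ≤ 1 ∧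
      (∀ x, FF n (δ x) = hh n x) ∧ LipschitzWith 1 (hh n) ∧
      (∀ x, dist x o ≤ Rad n → hh n x = 0) ∧
      (∀ x, 2*(Sf (Rad n)) ≤ dist x o → hh n x = 0) ∧ ε/4 < |FF n (γf (Rad n))| :=
    fun n => hprop (Rad n) (hRad1 n)
  have hdisj : ∀ (x : M) (m n : ℕ), m ≠ n → hh m x = 0 ∨ hh n x = 0 := by
    intro x m n hmn
    have aux : ∀ m n : ℕ, m < n → hh n x ≠ 0 → hh m x = 0 := by
      intro m n hlt hne
      have hxfar : Rad n < dist x o := by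
        by_contra hle
        push_neg at hle
        exact hne ((P n).2.2.2.2.2.2.1 x hle)
      apply (P m).2.2.2.2.2.2.2.1 x
      have h1 : Rad (m+1) ≤ Rad n := hRadmono hlt
      have h2 := (P m).2.1
      rw [hRadsucc] at h1
      linarith
    rcases Nat.lt_or_ge m n with hlt | hge
    · by_cases hz : hh n x = 0
      · exact Or.inr hz
      · exact Or.inl (aux m n hlt hz)
    · have hlt : n < m := lt_of_le_of_ne hge (fun h => hmn h.symm)
      by_cases hz : hh m x = 0
      · exact Or.inl hz
      · exact Or.inr (aux n m hlt hz)
  have key_norm : ∀ (θ : ℕ → ℝ), (∀ n, |θ n| ≤ 1) → ∀ N : ℕ,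
      ‖∑ i ∈ Finset.range N, θ i • FF i‖ ≤ 2 := by
    intro θ hθ N
    have hlipall : ∀ n, LipschitzWith 1 (hh n) := fun n => (P n).2.2.2.2.2.1
    have hH := my_sum_lipschitz hh hlipall hdisj θ hθ (Finset.range N)
    have hHo : (fun x => ∑ i ∈ Finset.range N, θ i * hh i x) o = 0 := by
      simp only
      apply Finset.sum_eq_zero
      intro i _
      rw [(P i).2.2.2.2.2.2.1 o (by rw [dist_self]; linarith [hRad1 i])]
      ring
    obtain ⟨ψ, hψn, hψδ⟩ := hδ.lift 2 _ hH hHo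
    have heq : (∑ i ∈ Finset.range N, θ i • FF i) = ψ := by
      apply my_funct_ext hδ
      intro x
      rw [hψδ x]
      simp only [ContinuousLinearMap.coe_sum', Finset.sum_apply,
        ContinuousLinearMap.coe_smul', Pi.smul_apply, smul_eq_mul]
      refine Finset.sum_congr rfl fun i _ => ?_
      rw [(P i).2.2.2.2.1 x]
    rw [heq]
    exact le_trans hψn (by norm_num)
  have hWUC : IsWUC FF := by
    intro Ψ
    apply summable_of_sum_range_le (c := 2 * ‖Ψ‖) (fun n => abs_nonneg _)
    intro N
    set θ : ℕ → ℝ := fun i => if Ψ (FF i) < 0 then -1 else 1 with hθdef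
    have hθ : ∀ i, |θ i| ≤ 1 := by
      intro i
      by_cases h : Ψ (FF i) < 0 <;> simp [hθdef, h]
    have hsumeq : ∑ i ∈ Finset.range N, |Ψ (FF i)| =
        Ψ (∑ i ∈ Finset.range N, θ i • FF i) := by
      rw [map_sum]
      refine Finset.sum_congr rfl fun i _ => ?_
      rw [map_smul, smul_eq_mul]
      by_cases h : Ψ (FF i) < 0
      · simp [hθdef, h, abs_of_neg h]
      · simp [hθdef, h, abs_of_nonneg (not_lt.mp h)]
    rw [hsumeq]
    calc Ψ (∑ i ∈ Finset.range N, θ i • FF i)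
        ≤ |Ψ (∑ i ∈ Finset.range N, θ i • FF i)| := le_abs_self _
      _ = ‖Ψ (∑ i ∈ Finset.range N, θ i • FF i)‖ := (Real.norm_eq_abs _).symm
      _ ≤ ‖Ψ‖ * ‖∑ i ∈ Finset.range N, θ i • FF i‖ := Ψ.le_opNorm _
      _ ≤ ‖Ψ‖ * 2 := mul_le_mul_of_nonneg_left (key_norm θ hθ N) (norm_nonneg _)
      _ = 2 * ‖Ψ‖ := mul_comm _ _
  obtain ⟨n, hn⟩ := (hΓ FF hWUC (ε/4) (by positivity)).exists
  have h1 := hn (γf (Rad n)) (P n).2.2.1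
  have h2 := (P n).2.2.2.2.2.2.2.2
  exact absurd h1 (not_le.mpr h2)
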